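/- arXiv:0811.4380 — 2 statements merged into one kernel-verified Lean document; each statement's English description precedes it below -/
import Mathlib

section
/- Let n ≥ 2 and let M be the Coxeter matrix of affine type Ã_n: the index set is ZMod (n+1), with M i i = 1, M i j = 3 when i − j = ±1 in ZMod (n+1), and M i j = 2 otherwise (so the Coxeter graph is a cycle on n+1 vertices with all edge labels 3). Then every word in the generators with the intervening neighbours property is reduced. -/
/-- A word `w` in the alphabet `B` has the *intervening neighbours* property with respect to
the Coxeter matrix `M` if any two occurrences of the same letter are separated by all of its
neighbours in the Coxeter graph of `M` (two distinct letters `s`, `t` being neighbours when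
`M s t ≠ 2`). -/
def HasInterveningNeighbours {B : Type*} (M : CoxeterMatrix B) (w : List B) : Prop :=
  ∀ (i j : ℕ) (hi : i < w.length) (hj : j < w.length), i < j →
    w.get ⟨i, hi⟩ = w.get ⟨j, hj⟩ →
    ∀ t : B, t ≠ w.get ⟨i, hi⟩ → M t (w.get ⟨i, hi⟩) ≠ 2 →
      ∃ (k : ℕ) (hk : k < w.length), i < k ∧ k < j ∧ w.get ⟨k, hk⟩ = t

/-- The Coxeter matrix of affine type Ãₙ (for `n ≥ 2`): the index set is `ZMod (n+1)`, and the
Coxeter graph is a cycle on the `n+1` vertices with all edge labels equal to `3`. -/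
def CoxeterMatrixAffineA (n : ℕ) : CoxeterMatrix (ZMod (n + 1)) where
  M := Matrix.of fun i j : ZMod (n + 1) =>
    if i = j then 1 else if i - j = 1 ∨ j - i = 1 then 3 else 2
  isSymm := by
    unfold Matrix.IsSymm
    ext i j
    simp only [Matrix.transpose_apply, Matrix.of_apply]
    rcases eq_or_ne i j with rfl | h
    · simp
    · rw [if_neg h.symm, if_neg h]
      exact if_congr or_comm rfl rfl
  diagonal := by intro i; simp
  off_diagonal := by
    intro i i' h
    simp only [Matrix.of_apply, if_neg h]
    split_ifs <;> omega

namespace INAffine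

variable (n : ℕ)

def T (i : ZMod (n+1)) (x : ℤ) : ℤ :=
  if (x : ZMod (n+1)) = i then x + 1 else if (x : ZMod (n+1)) = i + 1 then x - 1 else x

variable {n}

theorem one_ne_zero' (hn : 2 ≤ n) : (1 : ZMod (n+1)) ≠ 0 := by
  have : ((1:ℕ) : ZMod (n+1)) ≠ 0 := by
    rw [Ne, ZMod.natCast_eq_zero_iff]
    intro h; have := Nat.le_of_dvd (by norm_num) h; omega
  simpa using this

theorem two_ne_zero' (hn : 2 ≤ n) : (2 : ZMod (n+1)) ≠ 0 := by
  have : ((2:ℕ) : ZMod (n+1)) ≠ 0 := by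
    rw [Ne, ZMod.natCast_eq_zero_iff]
    intro h; have := Nat.le_of_dvd (by norm_num) h; omega
  simpa using this

theorem T_apply_eq {i : ZMod (n+1)} {x : ℤ} (h : (x : ZMod (n+1)) = i) : T n i x = x + 1 := by
  simp only [T, if_pos h]

theorem T_apply_eq' (hn : 2 ≤ n) {i : ZMod (n+1)} {x : ℤ} (h : (x : ZMod (n+1)) = i + 1) :
    T n i x = x - 1 := by
  have h1 : (x : ZMod (n+1)) ≠ i := by
    rw [h]; intro hc
    exact one_ne_zero' hn (by linear_combination hc)
  simp only [T, if_neg h1, if_pos h]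

theorem T_apply_ne {i : ZMod (n+1)} {x : ℤ} (h1 : (x : ZMod (n+1)) ≠ i)
    (h2 : (x : ZMod (n+1)) ≠ i + 1) : T n i x = x := by
  simp only [T, if_neg h1, if_neg h2]

theorem T_involutive (hn : 2 ≤ n) (i : ZMod (n+1)) : Function.Involutive (T n i) := by
  intro x
  rcases eq_or_ne ((x : ZMod (n+1))) i with h | h
  · rw [T_apply_eq h, T_apply_eq' hn (by push_cast [h]; ring)]
    ring
  rcases eq_or_ne ((x : ZMod (n+1))) (i+1) with h2 | h2
  · rw [T_apply_eq' hn h2, T_apply_eq (by push_cast [h2]; ring)]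
    ring
  · rw [T_apply_ne h h2, T_apply_ne h h2]

theorem T_braid (hn : 2 ≤ n) (i : ZMod (n+1)) (x : ℤ) :
    T n i (T n (i+1) (T n i (T n (i+1) (T n i (T n (i+1) x))))) = x := by
  have e1 : (1 : ZMod (n+1)) ≠ 0 := one_ne_zero' hn
  have e2 : (2 : ZMod (n+1)) ≠ 0 := two_ne_zero' hn
  rcases eq_or_ne ((x : ZMod (n+1))) i with h | h
  · rw [T_apply_ne (show (x : ZMod (n+1)) ≠ i + 1 by
          rw [h]; intro hc; exact e1 (by linear_combination -hc))
        (show (x : ZMod (n+1)) ≠ (i+1) + 1 by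
          rw [h]; intro hc; exact e2 (by linear_combination -hc)),
      T_apply_eq h,
      T_apply_eq (show ((x+1 : ℤ) : ZMod (n+1)) = i + 1 by push_cast [h]; ring),
      T_apply_ne (show ((x+1+1 : ℤ) : ZMod (n+1)) ≠ i by
          push_cast [h]; intro hc; exact e2 (by linear_combination hc))
        (show ((x+1+1 : ℤ) : ZMod (n+1)) ≠ i + 1 by
          push_cast [h]; intro hc; exact e1 (by linear_combination hc)),
      T_apply_eq' hn (show ((x+1+1 : ℤ) : ZMod (n+1)) = (i+1) + 1 by push_cast [h]; ring),
      T_apply_eq' hn (show ((x+1+1-1 : ℤ) : ZMod (n+1)) = i + 1 by push_cast [h]; ring)]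
    ring
  rcases eq_or_ne ((x : ZMod (n+1))) (i+1) with h2 | h2
  · rw [T_apply_eq h2,
      T_apply_ne (show ((x+1 : ℤ) : ZMod (n+1)) ≠ i by
          push_cast [h2]; intro hc; exact e2 (by linear_combination hc))
        (show ((x+1 : ℤ) : ZMod (n+1)) ≠ i + 1 by
          push_cast [h2]; intro hc; exact e1 (by linear_combination hc)),
      T_apply_eq' hn (show ((x+1 : ℤ) : ZMod (n+1)) = (i+1) + 1 by push_cast [h2]; ring),
      T_apply_eq' hn (show ((x+1-1 : ℤ) : ZMod (n+1)) = i + 1 by push_cast [h2]; ring),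
      T_apply_ne (show ((x+1-1-1 : ℤ) : ZMod (n+1)) ≠ i + 1 by
          push_cast [h2]; intro hc; exact e1 (by linear_combination -hc))
        (show ((x+1-1-1 : ℤ) : ZMod (n+1)) ≠ (i+1) + 1 by
          push_cast [h2]; intro hc; exact e2 (by linear_combination -hc)),
      T_apply_eq (show ((x+1-1-1 : ℤ) : ZMod (n+1)) = i by push_cast [h2]; ring)]
    ring
  rcases eq_or_ne ((x : ZMod (n+1))) (i+2) with h3 | h3
  · rw [T_apply_eq' hn (show (x : ZMod (n+1)) = (i+1) + 1 by rw [h3]; ring),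
      T_apply_eq' hn (show ((x-1 : ℤ) : ZMod (n+1)) = i + 1 by push_cast [h3]; ring),
      T_apply_ne (show ((x-1-1 : ℤ) : ZMod (n+1)) ≠ i + 1 by
          push_cast [h3]; intro hc; exact e1 (by linear_combination -hc))
        (show ((x-1-1 : ℤ) : ZMod (n+1)) ≠ (i+1) + 1 by
          push_cast [h3]; intro hc; exact e2 (by linear_combination -hc)),
      T_apply_eq (show ((x-1-1 : ℤ) : ZMod (n+1)) = i by push_cast [h3]; ring),
      T_apply_eq (show ((x-1-1+1 : ℤ) : ZMod (n+1)) = i + 1 by push_cast [h3]; ring),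
      T_apply_ne (show ((x-1-1+1+1 : ℤ) : ZMod (n+1)) ≠ i by
          push_cast [h3]; intro hc; exact e2 (by linear_combination hc))
        (show ((x-1-1+1+1 : ℤ) : ZMod (n+1)) ≠ i + 1 by
          push_cast [h3]; intro hc; exact e1 (by linear_combination hc))]
    ring
  · have h4 : (x : ZMod (n+1)) ≠ (i+1) + 1 := by rw [show (i+1)+1 = i+2 by ring]; exact h3
    rw [T_apply_ne h2 h4, T_apply_ne h h2, T_apply_ne h2 h4, T_apply_ne h h2,
      T_apply_ne h2 h4, T_apply_ne h h2]

theorem T_comm (hn : 2 ≤ n) {i j : ZMod (n+1)} (hij : i ≠ j) (hij1 : i - j ≠ 1)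
    (hji1 : j - i ≠ 1) (x : ℤ) : T n i (T n j x) = T n j (T n i x) := by
  have d1 : i ≠ j + 1 := fun h => hij1 (by linear_combination h)
  have d2 : i + 1 ≠ j := fun h => hji1 (by linear_combination -h)
  have d3 : i + 1 ≠ j + 1 := fun h => hij (by linear_combination h)
  rcases eq_or_ne ((x : ZMod (n+1))) i with h | h
  · rw [T_apply_ne (show (x : ZMod (n+1)) ≠ j by rw [h]; exact hij)
        (show (x : ZMod (n+1)) ≠ j + 1 by rw [h]; exact d1),
      T_apply_eq h,
      T_apply_ne (show ((x+1:ℤ) : ZMod (n+1)) ≠ j by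
          push_cast [h]; intro hc; exact d2 hc)
        (show ((x+1:ℤ) : ZMod (n+1)) ≠ j + 1 by
          push_cast [h]; intro hc; exact d3 hc)]
  rcases eq_or_ne ((x : ZMod (n+1))) (i+1) with h2 | h2
  · rw [T_apply_ne (show (x : ZMod (n+1)) ≠ j by rw [h2]; exact d2)
        (show (x : ZMod (n+1)) ≠ j + 1 by rw [h2]; exact d3),
      T_apply_eq' hn h2,
      T_apply_ne (show ((x-1:ℤ) : ZMod (n+1)) ≠ j by
          push_cast [h2]; intro hc; exact hij (by linear_combination hc))
        (show ((x-1:ℤ) : ZMod (n+1)) ≠ j + 1 by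
          push_cast [h2]; intro hc; exact d1 (by linear_combination hc))]
  rcases eq_or_ne ((x : ZMod (n+1))) j with h3 | h3
  · rw [T_apply_ne h h2, T_apply_eq h3,
      T_apply_ne (show ((x+1:ℤ) : ZMod (n+1)) ≠ i by
          push_cast [h3]; intro hc; exact d1 (by linear_combination -hc))
        (show ((x+1:ℤ) : ZMod (n+1)) ≠ i + 1 by
          push_cast [h3]; intro hc; exact d3 (by linear_combination -hc))]
  rcases eq_or_ne ((x : ZMod (n+1))) (j+1) with h4 | h4
  · rw [T_apply_ne h h2, T_apply_eq' hn h4,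
      T_apply_ne (show ((x-1:ℤ) : ZMod (n+1)) ≠ i by
          push_cast [h4]; intro hc; exact hij (by linear_combination -hc))
        (show ((x-1:ℤ) : ZMod (n+1)) ≠ i + 1 by
          push_cast [h4]; intro hc; exact d2 (by linear_combination -hc))]
  · rw [T_apply_ne h h2, T_apply_ne h3 h4, T_apply_ne h h2]

variable (n) in
/-- the periodic transposition as a permutation -/
noncomputable def tPerm (hn : 2 ≤ n) (i : ZMod (n+1)) : Equiv.Perm ℤ :=
  (T_involutive hn i).toPerm

theorem tPerm_apply (hn : 2 ≤ n) (i : ZMod (n+1)) (x : ℤ) : tPerm n hn i x = T n i x := rfl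

theorem isLiftable (hn : 2 ≤ n) :
    CoxeterMatrix.IsLiftable (CoxeterMatrixAffineA n) (tPerm n hn) := by
  have sq : ∀ i : ZMod (n+1), tPerm n hn i * tPerm n hn i = 1 := by
    intro i; ext x
    simp only [Equiv.Perm.mul_apply, tPerm_apply, Equiv.Perm.one_apply, T_involutive hn i x]
  have braid : ∀ i : ZMod (n+1), (tPerm n hn i * tPerm n hn (i+1)) ^ 3 = 1 := by
    intro i; ext x
    simp only [pow_succ, pow_zero, one_mul, Equiv.Perm.mul_apply, tPerm_apply,
      Equiv.Perm.one_apply]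
    exact T_braid hn i x
  have swap_pow : ∀ (a b : Equiv.Perm ℤ) (m : ℕ), (a * b) ^ m = 1 → (b * a) ^ m = 1 := by
    intro a b m h
    have hsc : SemiconjBy b (a * b) (b * a) := by
      unfold SemiconjBy; group
    have heq := (hsc.pow_right m).eq
    rw [h] at heq
    simp only [mul_one] at heq
    have h2 : (b * a) ^ m * b = 1 * b := by rw [← heq, one_mul]
    exact mul_right_cancel h2
  intro i j
  have hM : (CoxeterMatrixAffineA n) i j =
      (if i = j then 1 else if i - j = 1 ∨ j - i = 1 then 3 else 2 : ℕ) := rfl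
  rw [hM]
  rcases eq_or_ne i j with rfl | hij
  · rw [if_pos rfl, pow_one]; exact sq i
  rw [if_neg hij]
  by_cases hadj : i - j = 1 ∨ j - i = 1
  · rw [if_pos hadj]
    rcases hadj with h1 | h1
    · -- i = j + 1
      have : i = j + 1 := by linear_combination h1
      subst this
      exact swap_pow _ _ 3 (braid j)
    · have : j = i + 1 := by linear_combination h1
      subst this
      exact braid i
  · rw [if_neg hadj]
    push_neg at hadj
    have hc : tPerm n hn i * tPerm n hn j = tPerm n hn j * tPerm n hn i := by
      ext x
      simp only [Equiv.Perm.mul_apply, tPerm_apply]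
      exact T_comm hn hij hadj.1 hadj.2 x
    calc (tPerm n hn i * tPerm n hn j) ^ 2
        = tPerm n hn i * (tPerm n hn j * tPerm n hn i) * tPerm n hn j := by
          rw [pow_two]; group
      _ = tPerm n hn i * (tPerm n hn i * tPerm n hn j) * tPerm n hn j := by rw [← hc]
      _ = (tPerm n hn i * tPerm n hn i) * (tPerm n hn j * tPerm n hn j) := by group
      _ = 1 := by rw [sq, sq, one_mul]

variable (n) in
/-- the affine permutation representation -/
noncomputable def rho (hn : 2 ≤ n) :
    (CoxeterMatrixAffineA n).Group →* Equiv.Perm ℤ :=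
  (CoxeterMatrixAffineA n).toCoxeterSystem.lift ⟨tPerm n hn, isLiftable hn⟩

theorem rho_simple (hn : 2 ≤ n) (i : ZMod (n+1)) :
    rho n hn ((CoxeterMatrixAffineA n).toCoxeterSystem.simple i) = tPerm n hn i :=
  (CoxeterMatrixAffineA n).toCoxeterSystem.lift_apply_simple (isLiftable hn) i


/-! ### Words acting on ℤ -/

variable (n) in
/-- apply the letters of a word to an integer, rightmost letter first -/
def F (ω : List (ZMod (n+1))) : ℤ → ℤ := ω.foldr (fun i g => T n i ∘ g) id

theorem F_nil : F n ([] : List (ZMod (n+1))) = id := rfl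

theorem F_cons (i : ZMod (n+1)) (ω : List (ZMod (n+1))) : F n (i :: ω) = T n i ∘ F n ω := rfl

theorem F_append (ω σ : List (ZMod (n+1))) : F n (ω ++ σ) = F n ω ∘ F n σ := by
  induction ω with
  | nil => rfl
  | cons i ω ih => simp only [List.cons_append, F_cons, ih]; rfl

theorem F_singleton (i : ZMod (n+1)) : F n [i] = T n i := rfl

theorem T_injective (hn : 2 ≤ n) (i : ZMod (n+1)) : Function.Injective (T n i) :=
  (T_involutive hn i).injective

theorem F_injective (hn : 2 ≤ n) (ω : List (ZMod (n+1))) : Function.Injective (F n ω) := by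
  induction ω with
  | nil => exact fun a b h => h
  | cons i ω ih => exact ((T_injective hn i).comp ih : _)

theorem T_per (i : ZMod (n+1)) (x : ℤ) : T n i (x + (n+1)) = T n i x + (n+1) := by
  have hc : ((x + (n+1) : ℤ) : ZMod (n+1)) = (x : ZMod (n+1)) := by
    push_cast
    simp
  unfold T
  rw [hc]
  split_ifs <;> ring

theorem F_per (ω : List (ZMod (n+1))) (x : ℤ) : F n ω (x + (n+1)) = F n ω x + (n+1) := by
  induction ω with
  | nil => rfl
  | cons i ω ih =>
    simp only [F_cons, Function.comp_apply, ih, T_per]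

theorem rho_wordProd (hn : 2 ≤ n) (ω : List (ZMod (n+1))) :
    ⇑(rho n hn ((CoxeterMatrixAffineA n).toCoxeterSystem.wordProd ω)) = F n ω := by
  induction ω with
  | nil => simp [CoxeterSystem.wordProd_nil, F_nil]
  | cons i ω ih =>
    rw [CoxeterSystem.wordProd_cons, map_mul, rho_simple hn i]
    funext x
    simp only [Equiv.Perm.coe_mul, Function.comp_apply, ih, F_cons]
    rfl

/-! ### Inversion sets -/

variable (n) in
/-- the set of normalized inversion pairs of `f` -/
def InvSet (f : ℤ → ℤ) : Set (ℤ × ℤ) :=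
  {p | 0 ≤ p.1 ∧ p.1 < (n+1) ∧ p.1 < p.2 ∧ f p.2 < f p.1}

theorem InvSet_id : InvSet n (id : ℤ → ℤ) = ∅ := by
  ext p
  simp only [InvSet, Set.mem_setOf_eq, Set.mem_empty_iff_false, iff_false, id]
  rintro ⟨-, -, h1, h2⟩
  omega

theorem T_disp (i : ZMod (n+1)) (x : ℤ) : x - 1 ≤ T n i x ∧ T n i x ≤ x + 1 := by
  unfold T; split_ifs <;> omega

/-- on non-special pairs, `T i` preserves order -/
theorem T_lt (hn : 2 ≤ n) {i : ZMod (n+1)} {a b : ℤ} (hab : a < b)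
    (hsp : ¬(b = a + 1 ∧ (a : ZMod (n+1)) = i)) : T n i a < T n i b := by
  rcases lt_trichotomy (T n i a) (T n i b) with h | h | h
  · exact h
  · exact absurd (T_injective hn i h) (by omega)
  · exfalso
    have da := T_disp i a
    have db := T_disp i b
    have hb1 : b = a + 1 := by omega
    have hTa : T n i a = a + 1 := by omega
    have hres : (a : ZMod (n+1)) = i := by
      by_contra hne
      rcases eq_or_ne ((a : ZMod (n+1))) (i+1) with h2 | h2
      · rw [T_apply_eq' hn h2] at hTa; omega
      · rw [T_apply_ne hne h2] at hTa; omega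
    exact hsp ⟨hb1, hres⟩

theorem T_eq_add_one (hn : 2 ≤ n) {i : ZMod (n+1)} {z : ℤ} (h : T n i z = z + 1) :
    (z : ZMod (n+1)) = i := by
  by_contra hne
  rcases eq_or_ne ((z : ZMod (n+1))) (i+1) with h2 | h2
  · rw [T_apply_eq' hn h2] at h; omega
  · rw [T_apply_ne hne h2] at h; omega


variable (n) in
/-- normalize a pair so that the first coordinate is in `[0, n+1)` (for pairs that are
off by one period) -/
def normPair (p : ℤ × ℤ) : ℤ × ℤ :=
  if p.1 < 0 then (p.1 + (n+1), p.2 + (n+1))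
  else if (n+1 : ℤ) ≤ p.1 then (p.1 - (n+1), p.2 - (n+1)) else p

variable (n) in
/-- the relabeling map on inversion pairs induced by `T i` -/
def phi (i : ZMod (n+1)) (p : ℤ × ℤ) : ℤ × ℤ := normPair n (T n i p.1, T n i p.2)

/-- the canonical representative of the residue class `i` -/
def x0 (i : ZMod (n+1)) : ℤ := (i.val : ℤ)

theorem x0_nonneg (i : ZMod (n+1)) : 0 ≤ x0 i := Int.natCast_nonneg _

theorem x0_lt (i : ZMod (n+1)) : x0 i < (n+1 : ℕ) := by
  have := ZMod.val_lt i
  simp only [x0]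
  exact_mod_cast this

theorem x0_cast (i : ZMod (n+1)) : ((x0 i : ℤ) : ZMod (n+1)) = i := by
  have h := ZMod.natCast_val (n := n+1) (R := ZMod (n+1)) i
  rw [ZMod.cast_id] at h
  rw [x0, Int.cast_natCast, h]

theorem eq_x0_of (hn : 2 ≤ n) {i : ZMod (n+1)} {a : ℤ} (h0 : 0 ≤ a) (hN : a < (n+1:ℕ))
    (hres : (a : ZMod (n+1)) = i) : a = x0 i := by
  have h1 : (a : ZMod (n+1)) = ((x0 i : ℤ) : ZMod (n+1)) := by rw [hres, x0_cast]
  rw [ZMod.intCast_eq_intCast_iff'] at h1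
  have h2 := x0_nonneg i
  have h3 := x0_lt i
  rw [Int.emod_eq_of_lt h0 (by exact_mod_cast hN),
    Int.emod_eq_of_lt h2 (by exact_mod_cast h3)] at h1
  exact h1

theorem cast_N_zero : (((n+1 : ℕ) : ℤ) : ZMod (n+1)) = 0 := by
  push_cast
  simp

/-- the special pair never arises as the `phi`-image of an increasing pair -/
theorem phi_shift_ne_special (hn : 2 ≤ n) {i : ZMod (n+1)} {a b s : ℤ}
    (hab : a < b) (hs : (s : ZMod (n+1)) = 0)
    (hTa : T n i a = x0 i - s) (hTb : T n i b = x0 i + 1 - s) : False := by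
  have hres1 : ((x0 i - s : ℤ) : ZMod (n+1)) = i := by push_cast [hs, x0_cast]; ring
  have hres2 : ((x0 i + 1 - s : ℤ) : ZMod (n+1)) = i + 1 := by push_cast [hs, x0_cast]; ring
  have ha : a = x0 i - s + 1 := by
    have := T_involutive hn i a
    rw [hTa, T_apply_eq hres1] at this
    omega
  have hb : b = x0 i - s := by
    have := T_involutive hn i b
    rw [hTb, T_apply_eq' hn hres2] at this
    omega
  omega

theorem T_perm (i : ZMod (n+1)) (x : ℤ) : T n i (x - (n+1)) = T n i x - (n+1) := by
  have := T_per (n := n) i (x - (n+1))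
  simp only [sub_add_cancel] at this
  omega

theorem phi_apply (i : ZMod (n+1)) (a b : ℤ) :
    phi n i (a, b) =
      if T n i a < 0 then (T n i a + (n+1), T n i b + (n+1))
      else if (n+1 : ℤ) ≤ T n i a then (T n i a - (n+1), T n i b - (n+1))
      else (T n i a, T n i b) := rfl

theorem mem_InvSet_iff {f : ℤ → ℤ} {a b : ℤ} :
    (a, b) ∈ InvSet n f ↔ 0 ≤ a ∧ a < (n+1) ∧ a < b ∧ f b < f a := Iff.rfl

theorem mapsTo_phi (hn : 2 ≤ n) (f : ℤ → ℤ) (hinj : Function.Injective f)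
    (hper : ∀ x, f (x + (n+1)) = f x + (n+1)) (i : ZMod (n+1)) :
    Set.MapsTo (phi n i) (InvSet n (f ∘ T n i) \ {(x0 i, x0 i + 1)})
      (InvSet n f \ {(x0 i, x0 i + 1)}) := by
  have hperm : ∀ x, f (x - (n+1)) = f x - (n+1) := by
    intro x
    have := hper (x - (n+1))
    simp only [sub_add_cancel] at this
    omega
  rintro ⟨a, b⟩ ⟨hmem, hne⟩
  obtain ⟨ha0, haN, hab, hinv⟩ := mem_InvSet_iff.mp hmem
  simp only [Function.comp_apply] at hinv
  simp only [Set.mem_singleton_iff, Prod.mk.injEq] at hne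
  have hsp : ¬(b = a + 1 ∧ (a : ZMod (n+1)) = i) := by
    rintro ⟨h1, h2⟩
    have hax : a = x0 i := eq_x0_of hn ha0 haN h2
    exact hne ⟨hax, by omega⟩
  have hTlt : T n i a < T n i b := T_lt hn hab hsp
  have da := T_disp (n := n) i a
  have db := T_disp (n := n) i b
  rw [Set.mem_diff, phi_apply, Set.mem_singleton_iff]
  split_ifs with h1 h2
  · refine ⟨mem_InvSet_iff.mpr ⟨by omega, by omega, by omega, by rw [hper, hper]; omega⟩, ?_⟩
    simp only [Prod.mk.injEq, not_and]
    intro e1 e2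
    exact phi_shift_ne_special hn (i := i) hab (s := ((n+1:ℕ):ℤ))
      (by rw [cast_N_zero]) (by push_cast; omega) (by push_cast; omega)
  · refine ⟨mem_InvSet_iff.mpr ⟨by omega, by omega, by omega, by rw [hperm, hperm]; omega⟩, ?_⟩
    simp only [Prod.mk.injEq, not_and]
    intro e1 e2
    exact phi_shift_ne_special hn (i := i) hab (s := -((n+1:ℕ):ℤ))
      (by rw [Int.cast_neg, cast_N_zero]; ring) (by push_cast; omega) (by push_cast; omega)
  · refine ⟨mem_InvSet_iff.mpr ⟨by omega, by omega, by omega, by omega⟩, ?_⟩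
    simp only [Prod.mk.injEq, not_and]
    intro e1 e2
    exact phi_shift_ne_special hn (i := i) hab (s := 0) (by norm_num) (by omega) (by omega)

theorem phi_phi (hn : 2 ≤ n) (i : ZMod (n+1)) {p : ℤ × ℤ} (h0 : 0 ≤ p.1)
    (hN : p.1 < (n+1:ℕ)) : phi n i (phi n i p) = p := by
  obtain ⟨a, b⟩ := p
  simp only at h0 hN
  have hN' : a < (n+1 : ℤ) := by exact_mod_cast hN
  have da := T_disp (n := n) i a
  have ia := T_involutive hn i a
  have ib := T_involutive hn i b
  by_cases h1 : T n i a < 0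
  · have inner : phi n i (a, b) = (T n i a + (n+1), T n i b + (n+1)) := by
      rw [phi_apply, if_pos h1]
    rw [inner, phi_apply, T_per, T_per, ia, ib,
      if_neg (show ¬(a + ((n:ℤ)+1) < 0) by omega),
      if_pos (show ((n:ℤ)+1) ≤ a + ((n:ℤ)+1) by omega)]
    simp only [Prod.mk.injEq]; constructor <;> ring
  by_cases h2 : (n+1 : ℤ) ≤ T n i a
  · have inner : phi n i (a, b) = (T n i a - (n+1), T n i b - (n+1)) := by
      rw [phi_apply, if_neg h1, if_pos h2]
    rw [inner, phi_apply, T_perm, T_perm, ia, ib,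
      if_pos (show (a - ((n:ℤ)+1) < 0) by omega)]
    simp only [Prod.mk.injEq]; constructor <;> ring
  · have inner : phi n i (a, b) = (T n i a, T n i b) := by
      rw [phi_apply, if_neg h1, if_neg h2]
    rw [inner, phi_apply, ia, ib, if_neg (show ¬(a < 0) by omega),
      if_neg (show ¬(((n:ℤ)+1) ≤ a) by omega)]


theorem p0_mem_shift_iff (hn : 2 ≤ n) (f : ℤ → ℤ) (i : ZMod (n+1)) :
    ((x0 i, x0 i + 1) ∈ InvSet n (f ∘ T n i)) ↔ f (x0 i) < f (x0 i + 1) := by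
  have h1 : T n i (x0 i) = x0 i + 1 := T_apply_eq (x0_cast i)
  have h2 : T n i (x0 i + 1) = x0 i := by
    rw [T_apply_eq' hn (by push_cast [x0_cast]; ring)]; ring
  have h3 := x0_nonneg i
  have h4 := x0_lt i
  constructor
  · rintro ⟨-, -, -, hlt⟩
    simpa [h1, h2] using hlt
  · intro h
    exact ⟨h3, by exact_mod_cast h4, by omega, by simpa [h1, h2] using h⟩

theorem p0_mem_iff (f : ℤ → ℤ) (i : ZMod (n+1)) :
    ((x0 i, x0 i + 1) ∈ InvSet n f) ↔ f (x0 i + 1) < f (x0 i) := by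
  have h3 := x0_nonneg i
  have h4 := x0_lt i
  exact ⟨fun hm => hm.2.2.2, fun h => ⟨h3, by exact_mod_cast h4, by omega, h⟩⟩

theorem card_step (hn : 2 ≤ n) (f : ℤ → ℤ) (hinj : Function.Injective f)
    (hper : ∀ x, f (x + (n+1)) = f x + (n+1)) (i : ZMod (n+1))
    (hfin : (InvSet n f).Finite) :
    (InvSet n (f ∘ T n i)).Finite ∧
    (f (x0 i) < f (x0 i + 1) → (InvSet n (f ∘ T n i)).ncard = (InvSet n f).ncard + 1) ∧
    (f (x0 i + 1) < f (x0 i) → (InvSet n (f ∘ T n i)).ncard + 1 = (InvSet n f).ncard) := by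
  set p0 : ℤ × ℤ := (x0 i, x0 i + 1) with hp0
  have hg_inj : Function.Injective (f ∘ T n i) := hinj.comp (T_injective hn i)
  have hg_per : ∀ x, (f ∘ T n i) (x + (n+1)) = (f ∘ T n i) x + (n+1) := by
    intro x
    simp only [Function.comp_apply, T_per, hper]
  have hcomp : (f ∘ T n i) ∘ T n i = f := by
    funext x
    simp only [Function.comp_apply, T_involutive hn i x]
  have maps1 := mapsTo_phi hn f hinj hper i
  have maps2 := mapsTo_phi hn (f ∘ T n i) hg_inj hg_per i
  rw [hcomp] at maps2
  have hmemrange : ∀ {g : ℤ → ℤ} {p : ℤ × ℤ}, p ∈ InvSet n g \ {p0} →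
      0 ≤ p.1 ∧ p.1 < ((n+1:ℕ) : ℤ) := by
    rintro g p ⟨⟨hp1, hp2, -, -⟩, -⟩
    exact ⟨hp1, by exact_mod_cast hp2⟩
  have hbij : Set.BijOn (phi n i) (InvSet n (f ∘ T n i) \ {p0}) (InvSet n f \ {p0}) := by
    refine Set.InvOn.bijOn ⟨?_, ?_⟩ maps1 maps2
    · intro p hp
      exact phi_phi hn i (hmemrange hp).1 (hmemrange hp).2
    · intro p hp
      exact phi_phi hn i (hmemrange hp).1 (hmemrange hp).2
  have hfinB : (InvSet n f \ {p0}).Finite := hfin.diff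
  have hfinA : (InvSet n (f ∘ T n i) \ {p0}).Finite := by
    apply Set.Finite.of_finite_image _ hbij.injOn
    rw [hbij.image_eq]
    exact hfinB
  have hfinS' : (InvSet n (f ∘ T n i)).Finite := by
    apply Set.Finite.subset (hfinA.insert p0)
    intro p hp
    by_cases hpe : p = p0
    · exact hpe ▸ Set.mem_insert _ _
    · exact Set.mem_insert_of_mem _ ⟨hp, hpe⟩
  have cardAB : (InvSet n (f ∘ T n i) \ {p0}).ncard = (InvSet n f \ {p0}).ncard := by
    rw [← hbij.image_eq]
    exact (Set.ncard_image_of_injOn hbij.injOn).symm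
  refine ⟨hfinS', ?_, ?_⟩
  · intro hasc
    have hmem : p0 ∈ InvSet n (f ∘ T n i) := (p0_mem_shift_iff hn f i).mpr hasc
    have hnmem : p0 ∉ InvSet n f := fun hc => absurd ((p0_mem_iff f i).mp hc) (by omega)
    have e1 : InvSet n f \ {p0} = InvSet n f := Set.diff_singleton_eq_self hnmem
    rw [← Set.ncard_diff_singleton_add_one hmem hfinS', cardAB, e1]
  · intro hdesc
    have hmem : p0 ∈ InvSet n f := (p0_mem_iff f i).mpr hdesc
    have hnmem : p0 ∉ InvSet n (f ∘ T n i) := fun hc =>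
      absurd ((p0_mem_shift_iff hn f i).mp hc) (by omega)
    have e1 : InvSet n (f ∘ T n i) \ {p0} = InvSet n (f ∘ T n i) :=
      Set.diff_singleton_eq_self hnmem
    rw [← Set.ncard_diff_singleton_add_one hmem hfin, ← cardAB, e1]

theorem invcard_le (hn : 2 ≤ n) (ω : List (ZMod (n+1))) :
    (InvSet n (F n ω)).Finite ∧ (InvSet n (F n ω)).ncard ≤ ω.length := by
  induction ω using List.reverseRecOn with
  | nil =>
    rw [F_nil, InvSet_id]
    simp
  | append_singleton σ i ih =>
    have hF : F n (σ ++ [i]) = F n σ ∘ T n i := by rw [F_append, F_singleton]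
    obtain ⟨hfin0, hle⟩ := ih
    obtain ⟨hfin, hasc, hdesc⟩ := card_step hn (F n σ) (F_injective hn σ) (F_per σ) i hfin0
    rw [hF]
    refine ⟨hfin, ?_⟩
    rcases lt_trichotomy (F n σ (x0 i)) (F n σ (x0 i + 1)) with h | h | h
    · rw [hasc h, List.length_append]
      simpa using hle
    · exact absurd (F_injective hn σ h) (by omega)
    · have h2 := hdesc h
      rw [List.length_append]
      simp only [List.length_singleton]
      omega


/-! ### Trajectories -/

variable (n) in
/-- the position at time `t` of the wire that ends up (reading the word backwards) at `b` -/
def traj (ω : List (ZMod (n+1))) (b : ℤ) : ℕ → ℤ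
  | 0 => b
  | (t+1) => T n (ω.getD t 0) (traj ω b t)

theorem traj_succ (ω : List (ZMod (n+1))) (b : ℤ) (t : ℕ) :
    traj n ω b (t+1) = T n (ω.getD t 0) (traj n ω b t) := rfl

theorem F_take_traj (hn : 2 ≤ n) (ω : List (ZMod (n+1))) (b : ℤ) :
    ∀ t, t ≤ ω.length → F n (ω.take t) (traj n ω b t) = b := by
  intro t
  induction t with
  | zero => intro _; rfl
  | succ t ih =>
    intro ht
    have htlen : t < ω.length := by omega
    have htake : ω.take (t+1) = ω.take t ++ [ω.getD t 0] := by
      rw [List.getD_eq_getElem _ _ htlen, List.take_concat_get']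
    rw [htake, F_append, F_singleton, traj_succ, Function.comp_apply,
      T_involutive hn _ _]
    exact ih (by omega)

theorem traj_eq (hn : 2 ≤ n) {ω : List (ZMod (n+1))} {b : ℤ} {t : ℕ} {x : ℤ}
    (ht : t ≤ ω.length) (hx : F n (ω.take t) x = b) : traj n ω b t = x :=
  F_injective hn (ω.take t) ((F_take_traj hn ω b t ht).trans hx.symm)

/-! ### Coxeter matrix facts -/

theorem M_apply (a b : ZMod (n+1)) : (CoxeterMatrixAffineA n) a b =
    (if a = b then 1 else if a - b = 1 ∨ b - a = 1 then 3 else 2 : ℕ) := rfl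

theorem M_sub_one_ne_two (hn : 2 ≤ n) (j : ZMod (n+1)) :
    (CoxeterMatrixAffineA n) (j - 1) j ≠ 2 := by
  rw [M_apply, if_neg (fun h => one_ne_zero' hn (by linear_combination -h)),
    if_pos (Or.inr (by ring))]
  norm_num

theorem M_add_one_ne_two (hn : 2 ≤ n) (j : ZMod (n+1)) :
    (CoxeterMatrixAffineA n) (j + 1) j ≠ 2 := by
  rw [M_apply, if_neg (fun h => one_ne_zero' hn (by linear_combination h)),
    if_pos (Or.inl (by ring))]
  norm_num

theorem sub_one_ne (hn : 2 ≤ n) (j : ZMod (n+1)) : j - 1 ≠ j :=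
  fun h => one_ne_zero' hn (by linear_combination -h)

theorem add_one_ne (hn : 2 ≤ n) (j : ZMod (n+1)) : j + 1 ≠ j :=
  fun h => one_ne_zero' hn (by linear_combination h)

/-- restatement of the intervening neighbours property using `getD` -/
theorem IN_getD {ω : List (ZMod (n+1))}
    (hw : HasInterveningNeighbours (CoxeterMatrixAffineA n) ω) {p q : ℕ}
    (hpq : p < q) (hq : q < ω.length) (hletter : ω.getD p 0 = ω.getD q 0)
    (t : ZMod (n+1)) (ht : t ≠ ω.getD p 0)
    (hM : (CoxeterMatrixAffineA n) t (ω.getD p 0) ≠ 2) :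
    ∃ r, p < r ∧ r < q ∧ ω.getD r 0 = t := by
  have hp : p < ω.length := by omega
  have h1 : ω.get ⟨p, hp⟩ = ω.getD p 0 := by
    rw [List.getD_eq_getElem _ _ hp]; rfl
  have h2 : ω.get ⟨q, hq⟩ = ω.getD q 0 := by
    rw [List.getD_eq_getElem _ _ hq]; rfl
  obtain ⟨r, hr, hr1, hr2, hr3⟩ :=
    hw p q hp hq hpq (by rw [h1, h2, hletter]) t (by rwa [h1]) (by rwa [h1])
  refine ⟨r, hr1, hr2, ?_⟩
  rw [List.getD_eq_getElem _ _ hr]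
  exact hr3


/-- a wire that has just moved left can never move right again (IN property):
it keeps a record of the letter that last moved it, which equals its current residue -/
theorem mono_left (hn : 2 ≤ n) {ω : List (ZMod (n+1))}
    (hw : HasInterveningNeighbours (CoxeterMatrixAffineA n) ω) (b : ℤ) {m k : ℕ}
    (hk : k ≤ ω.length)
    (hres : ω.getD m 0 = ((traj n ω b (m+1) : ℤ) : ZMod (n+1)))
    (hmove : traj n ω b (m+1) = traj n ω b m - 1) :
    ∀ t, m < t → t ≤ k →
      ((∃ t₀, m ≤ t₀ ∧ t₀ < t ∧
        ω.getD t₀ 0 = ((traj n ω b t : ℤ) : ZMod (n+1)) ∧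
        traj n ω b (t₀+1) = traj n ω b t ∧
        traj n ω b t₀ = traj n ω b t + 1 ∧
        ∀ r, t₀ < r → r < t → traj n ω b (r+1) = traj n ω b r) ∧
      ∀ t', m < t' → t' ≤ t → traj n ω b t ≤ traj n ω b t') := by
  have main : ∀ t, m + 1 ≤ t → t ≤ k →
      ((∃ t₀, m ≤ t₀ ∧ t₀ < t ∧
        ω.getD t₀ 0 = ((traj n ω b t : ℤ) : ZMod (n+1)) ∧
        traj n ω b (t₀+1) = traj n ω b t ∧
        traj n ω b t₀ = traj n ω b t + 1 ∧
        ∀ r, t₀ < r → r < t → traj n ω b (r+1) = traj n ω b r) ∧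
      ∀ t', m < t' → t' ≤ t → traj n ω b t ≤ traj n ω b t') := by
    intro t ht1
    induction t, ht1 using Nat.le_induction with
    | base =>
      intro _
      refine ⟨⟨m, le_refl m, by omega, hres, rfl, by omega,
        fun r h1 h2 => absurd h2 (by omega)⟩, ?_⟩
      intro t' h1 h2
      have : t' = m + 1 := by omega
      subst this
      exact le_refl _
    | succ t ht1 ih =>
      intro ht2
      obtain ⟨⟨t₀, ht₀m, ht₀t, hlet, hstep0, hup, hstas⟩, hmono⟩ := ih (by omega)
      have hconst : ∀ r, t₀ + 1 ≤ r → r ≤ t → traj n ω b r = traj n ω b t := by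
        intro r hr1
        induction r, hr1 using Nat.le_induction with
        | base => intro _; exact hstep0
        | succ r hr1 ih2 =>
          intro hr2
          exact (hstas r (by omega) (by omega)).trans (ih2 (by omega))
      rcases eq_or_ne ((traj n ω b t : ℤ) : ZMod (n+1)) (ω.getD t 0) with hzj | hzj
      · -- the wire would move right: contradicts the intervening neighbours property
        exfalso
        have hlet2 : ω.getD t₀ 0 = ω.getD t 0 := by rw [hlet, hzj]
        obtain ⟨r, hr1, hr2, hr3⟩ := IN_getD hw ht₀t (by omega) hlet2
          (ω.getD t₀ 0 - 1) (sub_one_ne hn _) (M_sub_one_ne_two hn _)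
        have hzr : traj n ω b r = traj n ω b t := hconst r (by omega) (by omega)
        have hresr : ((traj n ω b r : ℤ) : ZMod (n+1)) = (ω.getD r 0) + 1 := by
          rw [hzr, hr3, hlet]; ring
        have hmv : traj n ω b (r+1) = traj n ω b r - 1 := by
          rw [traj_succ, T_apply_eq' hn hresr]
        have := hstas r (by omega) (by omega)
        omega
      rcases eq_or_ne ((traj n ω b t : ℤ) : ZMod (n+1)) (ω.getD t 0 + 1) with hzj1 | hzj1
      · -- the wire moves left
        have hT : traj n ω b (t+1) = traj n ω b t - 1 := by
          rw [traj_succ, T_apply_eq' hn hzj1]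
        refine ⟨⟨t, by omega, by omega, ?_, rfl, by omega,
          fun r h1 h2 => absurd h2 (by omega)⟩, ?_⟩
        · rw [hT]; push_cast; rw [hzj1]; ring
        · intro t' h1 h2
          rcases eq_or_lt_of_le h2 with he | hlt2
          · subst he; exact le_refl _
          · have := hmono t' h1 (by omega)
            omega
      · -- the wire does not move
        have hT : traj n ω b (t+1) = traj n ω b t := by
          rw [traj_succ, T_apply_ne hzj hzj1]
        refine ⟨⟨t₀, ht₀m, by omega, by rw [hT]; exact hlet, hstep0.trans hT.symm,
          by omega, ?_⟩, ?_⟩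
        · intro r h1 h2
          rcases eq_or_ne r t with he | hne
          · subst he; exact hT
          · exact hstas r h1 (by omega)
        · intro t' h1 h2
          rcases eq_or_lt_of_le h2 with he | hlt2
          · subst he; exact le_refl _
          · have := hmono t' h1 (by omega)
            omega
  intro t h1 h2
  exact main t (by omega) h2

/-- mirror image: a wire that has just moved right can never move left again -/
theorem mono_right (hn : 2 ≤ n) {ω : List (ZMod (n+1))}
    (hw : HasInterveningNeighbours (CoxeterMatrixAffineA n) ω) (c : ℤ) {m k : ℕ}
    (hk : k ≤ ω.length)
    (hres : ((traj n ω c m : ℤ) : ZMod (n+1)) = ω.getD m 0)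
    (hmove : traj n ω c (m+1) = traj n ω c m + 1) :
    ∀ t, m < t → t ≤ k →
      ((∃ t₀, m ≤ t₀ ∧ t₀ < t ∧
        (ω.getD t₀ 0) + 1 = ((traj n ω c t : ℤ) : ZMod (n+1)) ∧
        traj n ω c (t₀+1) = traj n ω c t ∧
        traj n ω c t₀ = traj n ω c t - 1 ∧
        ∀ r, t₀ < r → r < t → traj n ω c (r+1) = traj n ω c r) ∧
      ∀ t', m < t' → t' ≤ t → traj n ω c t' ≤ traj n ω c t) := by
  have main : ∀ t, m + 1 ≤ t → t ≤ k →
      ((∃ t₀, m ≤ t₀ ∧ t₀ < t ∧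
        (ω.getD t₀ 0) + 1 = ((traj n ω c t : ℤ) : ZMod (n+1)) ∧
        traj n ω c (t₀+1) = traj n ω c t ∧
        traj n ω c t₀ = traj n ω c t - 1 ∧
        ∀ r, t₀ < r → r < t → traj n ω c (r+1) = traj n ω c r) ∧
      ∀ t', m < t' → t' ≤ t → traj n ω c t' ≤ traj n ω c t) := by
    intro t ht1
    induction t, ht1 using Nat.le_induction with
    | base =>
      intro _
      refine ⟨⟨m, le_refl m, by omega, ?_, rfl, by omega,
        fun r h1 h2 => absurd h2 (by omega)⟩, ?_⟩
      · rw [hmove]; push_cast; rw [hres]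
      · intro t' h1 h2
        have : t' = m + 1 := by omega
        subst this
        exact le_refl _
    | succ t ht1 ih =>
      intro ht2
      obtain ⟨⟨t₀, ht₀m, ht₀t, hlet, hstep0, hup, hstas⟩, hmono⟩ := ih (by omega)
      have hconst : ∀ r, t₀ + 1 ≤ r → r ≤ t → traj n ω c r = traj n ω c t := by
        intro r hr1
        induction r, hr1 using Nat.le_induction with
        | base => intro _; exact hstep0
        | succ r hr1 ih2 =>
          intro hr2
          exact (hstas r (by omega) (by omega)).trans (ih2 (by omega))
      rcases eq_or_ne ((traj n ω c t : ℤ) : ZMod (n+1)) (ω.getD t 0 + 1) with hzj | hzj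
      · -- the wire would move left: contradicts the intervening neighbours property
        exfalso
        have hlet2 : ω.getD t₀ 0 = ω.getD t 0 := by
          have := hlet.trans hzj
          exact by linear_combination this
        obtain ⟨r, hr1, hr2, hr3⟩ := IN_getD hw ht₀t (by omega) hlet2
          (ω.getD t₀ 0 + 1) (add_one_ne hn _) (M_add_one_ne_two hn _)
        have hzr : traj n ω c r = traj n ω c t := hconst r (by omega) (by omega)
        have hresr : ((traj n ω c r : ℤ) : ZMod (n+1)) = ω.getD r 0 := by
          rw [hzr, hr3, hlet]
        have hmv : traj n ω c (r+1) = traj n ω c r + 1 := by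
          rw [traj_succ, T_apply_eq hresr]
        have := hstas r (by omega) (by omega)
        omega
      rcases eq_or_ne ((traj n ω c t : ℤ) : ZMod (n+1)) (ω.getD t 0) with hzj1 | hzj1
      · -- the wire moves right
        have hT : traj n ω c (t+1) = traj n ω c t + 1 := by
          rw [traj_succ, T_apply_eq hzj1]
        refine ⟨⟨t, by omega, by omega, ?_, rfl, by omega,
          fun r h1 h2 => absurd h2 (by omega)⟩, ?_⟩
        · rw [hT]; push_cast; rw [hzj1]
        · intro t' h1 h2
          rcases eq_or_lt_of_le h2 with he | hlt2
          · subst he; exact le_refl _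
          · have := hmono t' h1 (by omega)
            omega
      · -- the wire does not move
        have hT : traj n ω c (t+1) = traj n ω c t := by
          rw [traj_succ, T_apply_ne hzj1 hzj]
        refine ⟨⟨t₀, ht₀m, by omega, by rw [hT]; exact hlet, hstep0.trans hT.symm,
          by omega, ?_⟩, ?_⟩
        · intro r h1 h2
          rcases eq_or_ne r t with he | hne
          · subst he; exact hT
          · exact hstas r h1 (by omega)
        · intro t' h1 h2
          rcases eq_or_lt_of_le h2 with he | hlt2
          · subst he; exact le_refl _
          · have := hmono t' h1 (by omega)
            omega
  intro t h1 h2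
  exact main t (by omega) h2


/-- Core lemma: in a word with the intervening neighbours property, every step is an ascent. -/
theorem core (hn : 2 ≤ n) {ω : List (ZMod (n+1))}
    (hw : HasInterveningNeighbours (CoxeterMatrixAffineA n) ω) {k : ℕ} (hk : k < ω.length)
    (x : ℤ) (hx : (x : ZMod (n+1)) = ω.getD k 0) :
    F n (ω.take k) x < F n (ω.take k) (x + 1) := by
  by_contra hcon
  push_neg at hcon
  set b := F n (ω.take k) x with hb
  set c := F n (ω.take k) (x+1) with hc
  have hbc : c < b := by
    rcases eq_or_lt_of_le hcon with he | hlt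
    · exact absurd (F_injective hn (ω.take k) he.symm) (by omega)
    · exact hlt
  have hβk : traj n ω b k = x := traj_eq hn (le_of_lt hk) rfl
  have hγk : traj n ω c k = x + 1 := traj_eq hn (le_of_lt hk) rfl
  have hne : ∀ t, t ≤ ω.length → traj n ω b t ≠ traj n ω c t := by
    intro t ht heq
    have h1 := F_take_traj hn ω b t ht
    have h2 := F_take_traj hn ω c t ht
    rw [heq, h2] at h1
    omega
  classical
  set P : ℕ → Prop := fun t => traj n ω c t < traj n ω b t with hP
  have hP0 : P 0 := hbc
  set m := Nat.findGreatest P k with hm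
  have hPm : P m := Nat.findGreatest_spec (Nat.zero_le k) hP0
  have hmle : m ≤ k := Nat.findGreatest_le k
  have hmk' : m < k := by
    rcases eq_or_lt_of_le hmle with he | h
    · exfalso
      have : traj n ω c k < traj n ω b k := by rw [← he]; exact hPm
      omega
    · exact h
  have hnot : ¬ P (m+1) := Nat.findGreatest_is_greatest (n := k) (by omega) (by omega)
  have hlt1 : traj n ω b (m+1) < traj n ω c (m+1) := by
    rcases lt_trichotomy (traj n ω b (m+1)) (traj n ω c (m+1)) with h | h | h
    · exact h
    · exact absurd h (hne (m+1) (by omega))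
    · exact absurd h hnot
  have eβ : traj n ω b (m+1) = T n (ω.getD m 0) (traj n ω b m) := traj_succ ω b m
  have eγ : traj n ω c (m+1) = T n (ω.getD m 0) (traj n ω c m) := traj_succ ω c m
  have dβ := T_disp (n := n) (ω.getD m 0) (traj n ω b m)
  have dγ := T_disp (n := n) (ω.getD m 0) (traj n ω c m)
  have hPm' : traj n ω c m < traj n ω b m := hPm
  have hβm1 : traj n ω b (m+1) = traj n ω c m := by omega
  have hγm1 : traj n ω c (m+1) = traj n ω c m + 1 := by omega
  have hβm : traj n ω b m = traj n ω c m + 1 := by omega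
  have hresγ : ((traj n ω c m : ℤ) : ZMod (n+1)) = ω.getD m 0 :=
    T_eq_add_one hn (by rw [← eγ]; exact hγm1)
  have hL := mono_left hn hw b (le_of_lt hk) (m := m)
    (by rw [hβm1]; exact hresγ.symm) (by omega)
  have hR := mono_right hn hw c (le_of_lt hk) (m := m) hresγ hγm1
  obtain ⟨-, hmonoL⟩ := hL k hmk' (le_refl k)
  obtain ⟨-, hmonoR⟩ := hR k hmk' (le_refl k)
  have h1 : traj n ω b k ≤ traj n ω b (m+1) := hmonoL (m+1) (by omega) (by omega)
  have h2 : traj n ω c (m+1) ≤ traj n ω c k := hmonoR (m+1) (by omega) (by omega)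
  have hx_eq : x = traj n ω c m := by omega
  have hγconst : ∀ t, m < t → t ≤ k → traj n ω c t = traj n ω c m + 1 := by
    intro t h1' h2'
    have ha := hmonoR t h1' h2'
    obtain ⟨-, hm_t⟩ := hR t h1' h2'
    have hb' := hm_t (m+1) (by omega) (by omega)
    omega
  have hlk : ω.getD m 0 = ω.getD k 0 := by
    rw [← hx, hx_eq, hresγ]
  obtain ⟨r, hr1, hr2, hr3⟩ := IN_getD hw hmk' hk hlk
    ((ω.getD m 0) + 1) (add_one_ne hn _) (M_add_one_ne_two hn _)
  have hγr : traj n ω c r = traj n ω c m + 1 := hγconst r (by omega) (by omega)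
  have hmv : traj n ω c (r+1) = traj n ω c r + 1 := by
    rw [traj_succ, T_apply_eq (by rw [hγr]; push_cast; rw [hresγ, hr3])]
  have := hγconst (r+1) (by omega) (by omega)
  omega


/-- for an IN word, every prefix has inversion number equal to its length -/
theorem IN_count (hn : 2 ≤ n) {ω : List (ZMod (n+1))}
    (hw : HasInterveningNeighbours (CoxeterMatrixAffineA n) ω) :
    ∀ k, k ≤ ω.length →
      (InvSet n (F n (ω.take k))).Finite ∧ (InvSet n (F n (ω.take k))).ncard = k := by
  intro k
  induction k with
  | zero =>
    intro _
    rw [List.take_zero, F_nil, InvSet_id]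
    exact ⟨Set.finite_empty, Set.ncard_empty _⟩
  | succ k ih =>
    intro h
    obtain ⟨hfin, hcard⟩ := ih (by omega)
    have hklen : k < ω.length := by omega
    have htake : ω.take (k+1) = ω.take k ++ [ω.getD k 0] := by
      rw [List.getD_eq_getElem _ _ hklen, List.take_concat_get']
    obtain ⟨hfin', hasc, -⟩ := card_step hn (F n (ω.take k)) (F_injective hn _)
      (F_per _) (ω.getD k 0) hfin
    have hascent := core hn hw hklen (x0 (ω.getD k 0)) (x0_cast _)
    have hF : F n (ω.take (k+1)) = F n (ω.take k) ∘ T n (ω.getD k 0) := by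
      rw [htake, F_append, F_singleton]
    rw [hF]
    exact ⟨hfin', by rw [hasc hascent, hcard]⟩

end INAffine

/-- In the affine Coxeter group of type Ãₙ with `n ≥ 2`, every word with the intervening
neighbours property is reduced. -/
theorem intervening_neighbours_reduced_affineA (n : ℕ) (hn : 2 ≤ n)
    (w : List (ZMod (n + 1))) (hw : HasInterveningNeighbours (CoxeterMatrixAffineA n) w) :
    (CoxeterMatrixAffineA n).toCoxeterSystem.IsReduced w := by
  set cs := (CoxeterMatrixAffineA n).toCoxeterSystem with hcs
  show cs.length (cs.wordProd w) = w.length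
  have hle := cs.length_wordProd_le w
  obtain ⟨σ, hσlen, hσprod⟩ := cs.exists_reduced_word (cs.wordProd w)
  have hFσ : INAffine.F n σ = INAffine.F n w := by
    rw [← INAffine.rho_wordProd hn σ, ← INAffine.rho_wordProd hn w, ← hσprod]
  have hcount := (INAffine.IN_count hn hw w.length (le_refl _)).2
  rw [List.take_length] at hcount
  have hlow := (INAffine.invcard_le hn σ).2
  rw [hFσ, hcount] at hlow
  have := hσlen.eq; rw [← hσprod] at this; omega
end

section
/- Let G be a finite tree (a finite connected acyclic simple graph). For any two orientations o and o' of G, there is a finite sequence of sink firings transforming o into o'; that is, there exist orientations o = o₀, o₁, …, o_k = o' such that each o_{i+1} is obtained from o_i by firing some sink of o_i. -/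
set_option linter.unusedSectionVars false
set_option linter.unusedVariables false
set_option maxHeartbeats 1000000



/-- An orientation of a simple graph `G`: a relation `dir` such that `dir u v` implies that
`u` and `v` are adjacent (the edge being directed from `u` towards `v`), and such that for
every edge `{u, v}` exactly one of `dir u v`, `dir v u` holds. -/
structure SimpleGraph.Orientation {V : Type*} (G : SimpleGraph V) where
  dir : V → V → Prop
  adj_of_dir : ∀ ⦃u v : V⦄, dir u v → G.Adj u v
  xor_of_adj : ∀ ⦃u v : V⦄, G.Adj u v → Xor' (dir u v) (dir v u)

/-- A vertex `t` is a sink of the orientation `o` if every edge at `t` is directed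
towards `t`. -/
def SimpleGraph.Orientation.IsSink {V : Type*} {G : SimpleGraph V} (o : G.Orientation)
    (t : V) : Prop :=
  ∀ ⦃u : V⦄, G.Adj u t → o.dir u t

/-- Firing the vertex `t`: all edges at `t` become directed away from `t` (so that `t` becomes
a source), and the direction of every edge not involving `t` is unchanged. -/
def SimpleGraph.Orientation.fire {V : Type*} {G : SimpleGraph V} (o : G.Orientation)
    (t : V) : G.Orientation where
  dir u v := (u = t ∧ G.Adj u v) ∨ (u ≠ t ∧ v ≠ t ∧ o.dir u v)
  adj_of_dir := by
    rintro u v (⟨rfl, h⟩ | ⟨-, -, h⟩)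
    · exact h
    · exact o.adj_of_dir h
  xor_of_adj := by
    intro u v h
    by_cases hu : u = t
    · subst hu
      have hv : v ≠ u := fun hc => G.loopless.irrefl u (hc ▸ h)
      exact Or.inl ⟨Or.inl ⟨rfl, h⟩, by
        rintro (⟨rfl, -⟩ | ⟨-, hv', -⟩)
        · exact hv rfl
        · exact hv' rfl⟩
    · by_cases hv : v = t
      · subst hv
        exact Or.inr ⟨Or.inl ⟨rfl, h.symm⟩, by
          rintro (⟨rfl, -⟩ | ⟨-, hu', -⟩)
          · exact hu rfl
          · exact hu' rfl⟩
      · rcases o.xor_of_adj h with ⟨h1, h2⟩ | ⟨h1, h2⟩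
        · exact Or.inl ⟨Or.inr ⟨hu, hv, h1⟩, by
            rintro (⟨rfl, -⟩ | ⟨-, -, h3⟩)
            · exact hv rfl
            · exact h2 h3⟩
        · exact Or.inr ⟨Or.inr ⟨hv, hu, h1⟩, by
            rintro (⟨rfl, -⟩ | ⟨-, -, h3⟩)
            · exact hu rfl
            · exact h2 h3⟩


namespace SinkFiring
open SimpleGraph Finset

attribute [local instance] Classical.decEq

variable {V : Type*} [Fintype V] {G : SimpleGraph V}

lemma oriExt {o o' : G.Orientation} (h : ∀ u v, o.dir u v ↔ o'.dir u v) : o = o' := by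
  cases o; cases o'
  simp only [SimpleGraph.Orientation.mk.injEq]
  funext u v
  exact propext (h u v)

/-! ### Tree geometry -/

lemma exists_path_len (hG : G.IsTree) (r v : V) :
    ∃ p : G.Walk r v, p.IsPath ∧ p.length = G.dist r v := by
  obtain ⟨w, hw⟩ := hG.isConnected.exists_walk_length_eq_dist r v
  refine ⟨w.bypass, w.bypass_isPath, le_antisymm ?_ ?_⟩
  · calc w.bypass.length ≤ w.length := w.length_bypass_le
      _ = _ := hw
  · exact G.dist_le _

lemma dist_lt_card (hG : G.IsTree) (r v : V) : G.dist r v < Fintype.card V := by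
  obtain ⟨p, hp, hl⟩ := exists_path_len hG r v
  exact hl ▸ hp.length_lt

lemma isPath_concat {u v w : V} {p : G.Walk u v} (hp : p.IsPath) (h : G.Adj v w)
    (hw : w ∉ p.support) : (p.concat h).IsPath := by
  rw [← Walk.isPath_reverse_iff, Walk.reverse_concat]
  refine Walk.IsPath.cons (p.isPath_reverse_iff.2 hp) ?_
  simpa using hw

lemma not_mem_support_of_dist_lt (hG : G.IsTree) {r u v : V} {p : G.Walk r u}
    (hp : p.length = G.dist r u) (h : G.dist r u < G.dist r v) : v ∉ p.support := by
  intro hmem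
  have h1 : G.dist r v ≤ (p.takeUntil v hmem).length := G.dist_le _
  have h2 := p.length_takeUntil_le hmem
  omega

/-- adjacent vertices have distance from `r` differing by exactly one. -/
lemma adj_dist (hG : G.IsTree) (r : V) {u v : V} (h : G.Adj u v) :
    G.dist r v = G.dist r u + 1 ∨ G.dist r u = G.dist r v + 1 := by
  obtain ⟨pu, hpu, hlu⟩ := exists_path_len hG r u
  obtain ⟨pv, hpv, hlv⟩ := exists_path_len hG r v
  by_cases hm : v ∈ pu.support
  · right
    have hdrop : (pu.dropUntil v hm).IsPath := hpu.dropUntil hm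
    have hedge : (Walk.cons h.symm Walk.nil : G.Walk v u).IsPath := by
      simp [Walk.cons_isPath_iff, h.ne']
    have heq := (hG.existsUnique_path v u).unique hdrop hedge
    have hlen : (pu.takeUntil v hm).length + (pu.dropUntil v hm).length = pu.length := by
      rw [← Walk.length_append, pu.take_spec hm]
    have hdlen : (pu.dropUntil v hm).length = 1 := by rw [heq]; simp
    have h1 : G.dist r v ≤ (pu.takeUntil v hm).length := G.dist_le _
    have h2 : G.dist r u ≤ G.dist r v + 1 := by
      have := G.dist_le (pv.concat h.symm)
      simpa [Walk.length_concat, hlv] using this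
    omega
  · left
    have hq : (pu.concat h).IsPath := isPath_concat hpu h hm
    have heq := (hG.existsUnique_path r v).unique hq hpv
    have hl : (pu.concat h).length = pv.length := by rw [heq]
    rw [Walk.length_concat, hlu, hlv] at hl
    omega

/-- unique parent. -/
lemma parent_unique (hG : G.IsTree) (r : V) {u u' v : V} (hu : G.Adj u v) (hu' : G.Adj u' v)
    (hd : G.dist r u + 1 = G.dist r v) (hd' : G.dist r u' + 1 = G.dist r v) : u = u' := by
  obtain ⟨pu, hpu, hlu⟩ := exists_path_len hG r u
  obtain ⟨pu', hpu', hlu'⟩ := exists_path_len hG r u'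
  have hm : v ∉ pu.support := not_mem_support_of_dist_lt hG hlu (by omega)
  have hm' : v ∉ pu'.support := not_mem_support_of_dist_lt hG hlu' (by omega)
  have hq : (pu.concat hu).IsPath := isPath_concat hpu hu hm
  have hq' : (pu'.concat hu').IsPath := isPath_concat hpu' hu' hm'
  have heq := (hG.existsUnique_path r v).unique hq hq'
  obtain ⟨hv, -⟩ := Walk.concat_inj heq
  exact hv

/-! ### Steps and reversal -/

def Step (a b : G.Orientation) : Prop := ∃ t, a.IsSink t ∧ b = a.fire t

def Reaches (a b : G.Orientation) : Prop := Relation.ReflTransGen Step a b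

lemma Reaches.refl (a : G.Orientation) : Reaches a a := Relation.ReflTransGen.refl

lemma Reaches.trans {a b c : G.Orientation} (h : Reaches a b) (h' : Reaches b c) :
    Reaches a c := Relation.ReflTransGen.trans h h'

def rev (o : G.Orientation) : G.Orientation where
  dir u v := o.dir v u
  adj_of_dir := fun _ _ h => (o.adj_of_dir h).symm
  xor_of_adj := fun _ _ h => o.xor_of_adj h.symm

lemma rev_rev (o : G.Orientation) : rev (rev o) = o := oriExt (fun _ _ => Iff.rfl)

lemma step_rev {a b : G.Orientation} (h : Step a b) : Step (rev b) (rev a) := by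
  obtain ⟨t, hs, rfl⟩ := h
  refine ⟨t, ?_, oriExt ?_⟩
  · intro u hu
    show (a.fire t).dir t u
    exact Or.inl ⟨rfl, hu.symm⟩
  · intro u v
    refine Iff.symm ?_
    show ((rev (a.fire t)).fire t).dir u v ↔ a.dir v u
    by_cases hu : u = t
    · subst hu
      constructor
      · rintro (⟨-, hadj⟩ | ⟨hne, -, -⟩)
        · exact hs hadj.symm
        · exact absurd rfl hne
      · intro hd
        exact Or.inl ⟨rfl, (a.adj_of_dir hd).symm⟩
    · by_cases hv : v = t
      · subst hv
        constructor
        · rintro (⟨h1, -⟩ | ⟨-, h2, -⟩)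
          · exact absurd h1 hu
          · exact absurd rfl h2
        · intro hd
          have hadj := a.adj_of_dir hd
          rcases a.xor_of_adj hadj with ⟨h1, h2⟩ | ⟨h1, h2⟩
          · exact absurd (hs hadj.symm) h2
          · exact absurd hd h2
      · constructor
        · rintro (⟨h1, -⟩ | ⟨-, -, hd⟩)
          · exact absurd h1 hu
          · rcases hd with ⟨h1, -⟩ | ⟨-, -, hd⟩
            · exact absurd h1 hv
            · exact hd
        · intro hd
          exact Or.inr ⟨hu, hv, Or.inr ⟨hv, hu, hd⟩⟩

lemma reaches_rev {a b : G.Orientation} (h : Reaches a b) : Reaches (rev b) (rev a) := by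
  induction h with
  | refl => exact Reaches.refl _
  | tail hab hbc ih => exact Relation.ReflTransGen.head (step_rev hbc) ih


/-! ### The canonical family of orientations -/

/-- Orientation determined by a labelling `f`: the edge `{u,v}` with `v` deeper points
towards the shallower endpoint `u` iff `f v ≥ f u`. -/
def ori (hG : G.IsTree) (r : V) (f : V → ℕ) : G.Orientation where
  dir u v := G.Adj u v ∧
    ((G.dist r v < G.dist r u ∧ f v ≤ f u) ∨ (G.dist r u < G.dist r v ∧ f v < f u))
  adj_of_dir := by rintro u v ⟨h, -⟩; exact h
  xor_of_adj := by
    intro u v h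
    have hd := adj_dist hG r h
    by_cases hf : (G.dist r v < G.dist r u ∧ f v ≤ f u) ∨ (G.dist r u < G.dist r v ∧ f v < f u)
    · refine Or.inl ⟨⟨h, hf⟩, ?_⟩
      rintro ⟨-, (⟨h1, h2⟩ | ⟨h1, h2⟩)⟩ <;>
        · rcases hf with ⟨h3, h4⟩ | ⟨h3, h4⟩ <;> omega
    · refine Or.inr ⟨⟨h.symm, ?_⟩, fun hc => hf hc.2⟩
      push_neg at hf
      obtain ⟨hf1, hf2⟩ := hf
      rcases hd with h1 | h1
      · exact Or.inl ⟨by omega, by omega⟩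
      · exact Or.inr ⟨by omega, by omega⟩

lemma ori_fire (hG : G.IsTree) (r : V) (f f' : V → ℕ) (v₀ : V)
    (h0 : f' v₀ = f v₀ + 1) (hoth : ∀ x, x ≠ v₀ → f' x = f x)
    (hpar : ∀ u, G.Adj u v₀ → G.dist r u < G.dist r v₀ → f u = f v₀ + 1)
    (hchild : ∀ u, G.Adj u v₀ → G.dist r v₀ < G.dist r u → f u = f v₀) :
    (ori hG r f).IsSink v₀ ∧ (ori hG r f).fire v₀ = ori hG r f' := by
  constructor
  · intro u hu
    refine ⟨hu, ?_⟩
    rcases adj_dist hG r hu with h1 | h1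
    · have h2 := hpar u hu (by omega)
      exact Or.inr ⟨by omega, by omega⟩
    · have h2 := hchild u hu (by omega)
      exact Or.inl ⟨by omega, by omega⟩
  · apply oriExt
    intro u v
    by_cases hu : u = v₀
    · subst hu
      constructor
      · rintro (⟨-, hadj⟩ | ⟨hne, -, -⟩)
        · refine ⟨hadj, ?_⟩
          have hvne : v ≠ u := (G.ne_of_adj hadj).symm
          rcases adj_dist hG r hadj with h1 | h1
          · refine Or.inr ⟨by omega, ?_⟩
            rw [hoth v hvne, hchild v hadj.symm (by omega), h0]
            omega
          · refine Or.inl ⟨by omega, ?_⟩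
            rw [hoth v hvne, hpar v hadj.symm (by omega), h0]
        · exact absurd rfl hne
      · rintro ⟨hadj, -⟩
        exact Or.inl ⟨rfl, hadj⟩
    · by_cases hv : v = v₀
      · subst hv
        constructor
        · rintro (⟨h1, -⟩ | ⟨-, h2, -⟩)
          · exact absurd h1 hu
          · exact absurd rfl h2
        · rintro ⟨hadj, hcase⟩
          exfalso
          have hune : u ≠ v := G.ne_of_adj hadj
          rcases adj_dist hG r hadj with h1 | h1
          · have := hpar u hadj (by omega)
            rw [hoth u hune, this, h0] at hcase
            rcases hcase with ⟨h2, h3⟩ | ⟨h2, h3⟩ <;> omega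
          · have := hchild u hadj (by omega)
            rw [hoth u hune, this, h0] at hcase
            rcases hcase with ⟨h2, h3⟩ | ⟨h2, h3⟩ <;> omega
      · constructor
        · rintro (⟨h1, -⟩ | ⟨-, -, hadj, hd⟩)
          · exact absurd h1 hu
          · refine ⟨hadj, ?_⟩
            rw [hoth u hu, hoth v hv]
            exact hd
        · rintro ⟨hadj, hd⟩
          rw [hoth u hu, hoth v hv] at hd
          exact Or.inr ⟨hu, hv, hadj, hd⟩

/-- The wave lemma: from the all-towards-`r` orientation one can reach the
all-away-from-`r` orientation. -/
lemma lemW (hG : G.IsTree) (r : V) :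
    Reaches (ori hG r (fun _ => 0))
      (ori hG r (fun v => Fintype.card V - G.dist r v)) := by
  classical
  set n := Fintype.card V with hn
  have key : ∀ (m : ℕ) (f : V → ℕ), (∀ v, f v ≤ n - G.dist r v) →
      (∀ u v, G.Adj u v → G.dist r u < G.dist r v → f v ≤ f u ∧ f u ≤ f v + 1) →
      (∑ v, (n - G.dist r v - f v)) ≤ m →
      Reaches (ori hG r f) (ori hG r (fun v => n - G.dist r v)) := by
    intro m
    induction m with
    | zero =>
      intro f h1 h2 hm
      have hall : ∀ v, f v = n - G.dist r v := by
        intro v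
        have hle : n - G.dist r v - f v ≤ 0 := le_trans (Finset.single_le_sum
          (f := fun v => n - G.dist r v - f v) (fun i _ => Nat.zero_le _) (mem_univ v)) hm
        have := h1 v
        omega
      rw [show f = (fun v => n - G.dist r v) from funext hall]
      exact Reaches.refl _
    | succ m ih =>
      intro f h1 h2 hm
      by_cases hB : (univ.filter (fun v => f v < n - G.dist r v)).Nonempty
      · obtain ⟨v₀, hv₀B, hmin⟩ :=
          Finset.exists_min_image _ (fun v => 2 * f v + G.dist r v) hB
        rw [mem_filter] at hv₀B
        have hv₀ : f v₀ < n - G.dist r v₀ := hv₀B.2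
        have hdlt : G.dist r v₀ < n := by omega
        have hpar : ∀ u, G.Adj u v₀ → G.dist r u < G.dist r v₀ → f u = f v₀ + 1 := by
          intro u hu hd
          obtain ⟨hle, hge⟩ := h2 u v₀ hu hd
          by_contra hne
          have hfu : f u = f v₀ := by omega
          have huB : u ∈ univ.filter (fun v => f v < n - G.dist r v) := by
            rw [mem_filter]
            exact ⟨mem_univ _, by omega⟩
          have := hmin u huB
          omega
        have hchild : ∀ u, G.Adj u v₀ → G.dist r v₀ < G.dist r u → f u = f v₀ := by
          intro u hu hd
          obtain ⟨hle, hge⟩ := h2 v₀ u hu.symm hd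
          by_contra hne
          have hfu : f u + 1 = f v₀ := by omega
          have hdu : G.dist r u = G.dist r v₀ + 1 := by
            rcases adj_dist hG r hu with h | h <;> omega
          have huB : u ∈ univ.filter (fun v => f v < n - G.dist r v) := by
            rw [mem_filter]
            exact ⟨mem_univ _, by omega⟩
          have := hmin u huB
          omega
        clear hdlt
        set f' : V → ℕ := fun x => if x = v₀ then f v₀ + 1 else f x with hf'
        obtain ⟨hsink, hfire⟩ := ori_fire hG r f f' v₀ (by simp [hf'])
          (fun x hx => by simp [hf', hx]) hpar hchild
        have hstep : Step (ori hG r f) (ori hG r f') := ⟨v₀, hsink, hfire.symm⟩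
        have hI1 : ∀ v, f' v ≤ n - G.dist r v := by
          intro v
          by_cases hv : v = v₀
          · subst hv
            simp only [hf', if_pos rfl]
            omega
          · simp only [hf', if_neg hv]
            exact h1 v
        have hI2 : ∀ u v, G.Adj u v → G.dist r u < G.dist r v →
            f' v ≤ f' u ∧ f' u ≤ f' v + 1 := by
          intro u v hu hd
          have hne : u ≠ v := G.ne_of_adj hu
          obtain ⟨hle, hge⟩ := h2 u v hu hd
          by_cases h3 : u = v₀
          · subst h3
            have := hchild v hu.symm (by omega)
            simp only [hf', if_pos rfl, if_neg hne.symm]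
            omega
          · by_cases h4 : v = v₀
            · subst h4
              have := hpar u hu (by omega)
              simp only [hf', if_pos rfl, if_neg h3]
              omega
            · simp only [hf', if_neg h3, if_neg h4]
              omega
        have hsum : (∑ v, (n - G.dist r v - f' v)) ≤ m := by
          have hlt : (∑ v, (n - G.dist r v - f' v)) < ∑ v, (n - G.dist r v - f v) := by
            apply Finset.sum_lt_sum
            · intro i _
              simp only [hf']
              by_cases hi : i = v₀
              · subst hi
                simp only [if_true, eq_self_iff_true]
                omega
              · simp only [if_neg hi]
                omega
            · refine ⟨v₀, mem_univ _, ?_⟩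
              simp only [hf', if_pos rfl]
              omega
          omega
        exact Relation.ReflTransGen.head hstep (ih f' hI1 hI2 hsum)
      · have hall : ∀ v, f v = n - G.dist r v := by
          intro v
          have h3 : ¬ (f v < n - G.dist r v) := by
            intro hc
            exact hB ⟨v, mem_filter.2 ⟨mem_univ _, hc⟩⟩
          have := h1 v
          omega
        rw [show f = (fun v => n - G.dist r v) from funext hall]
        exact Reaches.refl _
  exact key _ (fun _ => 0) (fun v => Nat.zero_le _)
    (fun u v _ _ => ⟨Nat.zero_le _, Nat.le_succ _⟩) le_rfl


/-! ### Every orientation reaches the all-towards-r orientation -/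

open Classical in
/-- Weighted count of "downward" edges (directed away from `r`). -/
noncomputable def phi (r : V) (o : G.Orientation) : ℕ :=
  ∑ v : V, if ∃ u, o.dir u v ∧ G.dist r u < G.dist r v
    then (Fintype.card V + 1) ^ (Fintype.card V - G.dist r v) else 0

lemma stepA (hG : G.IsTree) (r : V) (o : G.Orientation)
    (hne : o ≠ ori hG r (fun _ => 0)) :
    ∃ o₂, Step o o₂ ∧ phi r o₂ < phi r o := by
  classical
  set n := Fintype.card V with hn
  have hD : ∃ p : V × V, o.dir p.1 p.2 ∧ G.dist r p.1 < G.dist r p.2 := by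
    by_contra hcon
    push_neg at hcon
    have hcon' : ∀ a b, o.dir a b → G.dist r b ≤ G.dist r a :=
      fun a b h => hcon (a, b) h
    apply hne
    apply oriExt
    intro u v
    constructor
    · intro h
      have hadj := o.adj_of_dir h
      refine ⟨hadj, ?_⟩
      have hc := hcon' u v h
      rcases adj_dist hG r hadj with h1 | h1
      · exact absurd hc (by omega)
      · exact Or.inl ⟨by omega, Nat.le_refl 0⟩
    · rintro ⟨hadj, hc⟩
      rcases o.xor_of_adj hadj with ⟨hd, -⟩ | ⟨hd, hnd⟩
      · exact hd
      · exfalso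
        have hvu := hcon' v u hd
        rcases hc with ⟨h1, -⟩ | ⟨-, h2⟩
        · exact absurd hvu (by omega)
        · exact Nat.lt_irrefl 0 h2
  obtain ⟨p₀, hp₀⟩ := hD
  set D := univ.filter (fun p : V × V => o.dir p.1 p.2 ∧ G.dist r p.1 < G.dist r p.2)
    with hDdef
  obtain ⟨q, hqD, hqmax⟩ := Finset.exists_max_image D (fun p => G.dist r p.2)
    ⟨p₀, mem_filter.2 ⟨mem_univ _, hp₀⟩⟩
  rw [hDdef, mem_filter] at hqD
  obtain ⟨-, hdir, hdlt⟩ := hqD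
  have hpadj : G.Adj q.1 q.2 := o.adj_of_dir hdir
  have hpd : G.dist r q.1 + 1 = G.dist r q.2 := by
    rcases adj_dist hG r hpadj with h | h <;> omega
  have hsink : o.IsSink q.2 := by
    intro u hu
    rcases adj_dist hG r hu with h1 | h1
    · have : u = q.1 := parent_unique hG r hu hpadj (by omega) (by omega)
      rw [this]
      exact hdir
    · rcases o.xor_of_adj hu with ⟨h2, -⟩ | ⟨h2, h3⟩
      · exact h2
      · exfalso
        have hmem : (q.2, u) ∈ D := mem_filter.2
          ⟨mem_univ _, h2, show G.dist r q.2 < G.dist r u by omega⟩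
        have h4 : G.dist r u ≤ G.dist r q.2 := hqmax _ hmem
        omega
  set t := q.2 with htdef
  refine ⟨o.fire t, ⟨t, hsink, rfl⟩, ?_⟩
  -- counting
  set w1 : ℕ := (n + 1) ^ (n - (G.dist r t + 1)) with hw1
  have hdtn : G.dist r t < n := dist_lt_card hG r t
  have hw1pos : 0 < w1 := pow_pos (by omega) _
  have hwt : (n + 1) ^ (n - G.dist r t) = (n + 1) * w1 := by
    rw [hw1, ← pow_succ']
    congr 1
    omega
  set P : V → Prop := fun v => G.Adj t v ∧ G.dist r v = G.dist r t + 1 with hP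
  set W : V → ℕ := fun v => (n + 1) ^ (n - G.dist r v) with hW
  have fa : ¬ (∃ u, (o.fire t).dir u t ∧ G.dist r u < G.dist r t) := by
    rintro ⟨u, hdu, -⟩
    rcases hdu with ⟨rfl, hadj⟩ | ⟨-, h2, -⟩
    · exact G.loopless.irrefl _ hadj
    · exact h2 rfl
  have fb : ∀ v, P v → (∃ u, (o.fire t).dir u v ∧ G.dist r u < G.dist r v) ∧
      ¬ (∃ u, o.dir u v ∧ G.dist r u < G.dist r v) := by
    rintro v ⟨hadjtv, hdv⟩
    constructor
    · exact ⟨t, Or.inl ⟨rfl, hadjtv⟩, by omega⟩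
    · rintro ⟨u, hdu, hlt⟩
      have hadj := o.adj_of_dir hdu
      have hud : G.dist r u + 1 = G.dist r v := by
        rcases adj_dist hG r hadj with h | h <;> omega
      have hut : u = t := parent_unique hG r hadj hadjtv hud (by omega)
      subst hut
      rcases o.xor_of_adj hadjtv with ⟨-, h2⟩ | ⟨-, h2⟩
      · exact h2 (hsink hadjtv.symm)
      · exact h2 hdu
  have fc : ∀ v, v ≠ t → ¬ P v →
      ((∃ u, (o.fire t).dir u v ∧ G.dist r u < G.dist r v) ↔
       (∃ u, o.dir u v ∧ G.dist r u < G.dist r v)) := by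
    intro v hvt hPv
    constructor
    · rintro ⟨u, hdu, hlt⟩
      rcases hdu with ⟨rfl, hadj⟩ | ⟨-, -, hdu'⟩
      · exfalso
        apply hPv
        refine ⟨hadj, ?_⟩
        rcases adj_dist hG r hadj with h | h <;> omega
      · exact ⟨u, hdu', hlt⟩
    · rintro ⟨u, hdu, hlt⟩
      have hadj := o.adj_of_dir hdu
      have hut : u ≠ t := by
        rintro rfl
        rcases o.xor_of_adj hadj with ⟨-, h2⟩ | ⟨-, h2⟩
        · exact h2 (hsink hadj.symm)
        · exact h2 hdu
      exact ⟨u, Or.inr ⟨hut, hvt, hdu⟩, hlt⟩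
  have htmem : t ∈ univ.filter (fun v => ¬ P v) := by
    rw [mem_filter]
    refine ⟨mem_univ _, fun hc => G.loopless.irrefl t hc.1⟩
  set S : ℕ := ∑ v ∈ (univ.filter (fun v => ¬ P v)).erase t,
      (if ∃ u, o.dir u v ∧ G.dist r u < G.dist r v then W v else 0) with hS
  have hphi2 : phi r (o.fire t) ≤ n * w1 + S := by
    rw [phi, ← Finset.sum_filter_add_sum_filter_not univ P]
    have e1 : ∑ v ∈ univ.filter P,
        (if ∃ u, (o.fire t).dir u v ∧ G.dist r u < G.dist r v then W v else 0) =
        ∑ v ∈ univ.filter P, w1 := by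
      apply Finset.sum_congr rfl
      intro v hv
      rw [mem_filter] at hv
      rw [if_pos (fb v hv.2).1]
      simp only [hW, hw1]
      rw [hv.2.2]
    have e2 : ∑ v ∈ univ.filter (fun v => ¬ P v),
        (if ∃ u, (o.fire t).dir u v ∧ G.dist r u < G.dist r v then W v else 0) = S := by
      rw [hS, ← Finset.add_sum_erase _ _ htmem, if_neg fa, zero_add]
      apply Finset.sum_congr rfl
      intro v hv
      rw [mem_erase] at hv
      have hvP := (mem_filter.1 hv.2).2
      by_cases hb : ∃ u, o.dir u v ∧ G.dist r u < G.dist r v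
      · rw [if_pos ((fc v hv.1 hvP).2 hb), if_pos hb]
      · rw [if_neg (fun hc => hb ((fc v hv.1 hvP).1 hc)), if_neg hb]
    rw [e1, e2, Finset.sum_const, smul_eq_mul]
    have hcard : (univ.filter P).card ≤ n := le_trans (card_filter_le _ _) (by rw [card_univ])
    exact Nat.add_le_add_right (Nat.mul_le_mul_right _ hcard) _
  have hphi1 : phi r o = (n + 1) * w1 + S := by
    rw [phi, ← Finset.sum_filter_add_sum_filter_not univ P]
    have e1 : ∑ v ∈ univ.filter P,
        (if ∃ u, o.dir u v ∧ G.dist r u < G.dist r v then W v else 0) = 0 := by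
      apply Finset.sum_eq_zero
      intro v hv
      rw [mem_filter] at hv
      rw [if_neg (fb v hv.2).2]
    have e2 : ∑ v ∈ univ.filter (fun v => ¬ P v),
        (if ∃ u, o.dir u v ∧ G.dist r u < G.dist r v then W v else 0) =
        (n + 1) * w1 + S := by
      rw [hS, ← Finset.add_sum_erase _ _ htmem, if_pos ⟨q.1, hdir, hdlt⟩,
        show W t = (n + 1) * w1 from hwt]
    rw [e1, e2, zero_add]
  rw [hphi1]
  have : n * w1 < (n + 1) * w1 := Nat.mul_lt_mul_of_pos_right (by omega) hw1pos
  omega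

lemma lemA (hG : G.IsTree) (r : V) (o : G.Orientation) :
    Reaches o (ori hG r (fun _ => 0)) := by
  classical
  have H : ∀ (m : ℕ) (o : G.Orientation), phi r o ≤ m →
      Reaches o (ori hG r (fun _ => 0)) := by
    intro m
    induction m with
    | zero =>
      intro o hm
      by_cases he : o = ori hG r (fun _ => 0)
      · rw [he]
        exact Reaches.refl _
      · obtain ⟨o₂, -, hlt⟩ := stepA hG r o he
        omega
    | succ m ih =>
      intro o hm
      by_cases he : o = ori hG r (fun _ => 0)
      · rw [he]
        exact Reaches.refl _
      · obtain ⟨o₂, hs, hlt⟩ := stepA hG r o he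
        exact Relation.ReflTransGen.head hs (ih o₂ (by omega))
  exact H (phi r o) o le_rfl

/-! ### Assembly -/

lemma rev_ori0 (hG : G.IsTree) (r : V) :
    rev (ori hG r (fun _ => 0)) =
      ori hG r (fun v => Fintype.card V - G.dist r v) := by
  apply oriExt
  intro u v
  have h1 := dist_lt_card hG r u
  have h2 := dist_lt_card hG r v
  show (ori hG r (fun _ => 0)).dir v u ↔ _
  constructor
  · rintro ⟨hadj, hc⟩
    refine ⟨hadj.symm, ?_⟩
    have h3 : G.dist r u < G.dist r v := by
      rcases hc with ⟨h3, -⟩ | ⟨-, h4⟩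
      · exact h3
      · exact absurd h4 (show ¬ (0 : ℕ) < 0 by omega)
    exact Or.inr ⟨h3,
      show Fintype.card V - G.dist r v < Fintype.card V - G.dist r u by omega⟩
  · rintro ⟨hadj, hc⟩
    refine ⟨hadj.symm, ?_⟩
    have h3 : G.dist r u < G.dist r v := by
      rcases hc with ⟨h3, h4⟩ | ⟨h3, -⟩
      · exact absurd h4
          (show ¬ (Fintype.card V - G.dist r v ≤ Fintype.card V - G.dist r u) by omega)
      · exact h3
    exact Or.inl ⟨h3, Nat.le_refl 0⟩

lemma main (hG : G.IsTree) (o o' : G.Orientation) : Reaches o o' := by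
  classical
  obtain ⟨r⟩ : Nonempty V := hG.isConnected.nonempty
  have h1 := lemA hG r o
  have h2 := lemW hG r
  have h3 := reaches_rev (lemA hG r (rev o'))
  rw [rev_rev, rev_ori0 hG r] at h3
  exact (h1.trans h2).trans h3

lemma toSeq {a b : G.Orientation} (h : Reaches a b) :
    ∃ (k : ℕ) (seq : Fin (k + 1) → G.Orientation),
      seq 0 = a ∧ seq (Fin.last k) = b ∧
      ∀ i : Fin k, ∃ t : V, (seq i.castSucc).IsSink t ∧
        seq i.succ = (seq i.castSucc).fire t := by
  induction h with
  | refl => exact ⟨0, fun _ => a, rfl, rfl, fun i => i.elim0⟩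
  | @tail b c hab hbc ih =>
    obtain ⟨k, seq, h0, hl, hstep⟩ := ih
    obtain ⟨t, hts, htf⟩ := hbc
    refine ⟨k + 1, Fin.snoc seq c, ?_, ?_, ?_⟩
    · rw [← Fin.castSucc_zero, Fin.snoc_castSucc]
      exact h0
    · rw [Fin.snoc_last]
    · intro i
      refine Fin.lastCases ?_ ?_ i
      · refine ⟨t, ?_, ?_⟩
        · rw [Fin.snoc_castSucc, hl]
          exact hts
        · rw [Fin.succ_last, Fin.snoc_last, Fin.snoc_castSucc, hl]
          exact htf
      · intro j
        obtain ⟨t', ht's, ht'f⟩ := hstep j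
        refine ⟨t', ?_, ?_⟩
        · rw [Fin.snoc_castSucc]
          exact ht's
        · rw [Fin.succ_castSucc, Fin.snoc_castSucc, Fin.snoc_castSucc]
          exact ht'f

end SinkFiring

/-- On a finite tree, any orientation can be transformed into any other orientation by a
finite sequence of sink firings. -/
theorem Orientation.tree_connected_by_sink_firings {V : Type*} [Fintype V]
    (G : SimpleGraph V) (hG : G.IsTree) (o o' : G.Orientation) :
    ∃ (k : ℕ) (seq : Fin (k + 1) → G.Orientation),
      seq 0 = o ∧ seq (Fin.last k) = o' ∧
      ∀ i : Fin k, ∃ t : V, (seq i.castSucc).IsSink t ∧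
        seq i.succ = (seq i.castSucc).fire t := by
  exact SinkFiring.toSeq (SinkFiring.main hG o o')
end
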